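/- For every integer m ≥ 3 there exist finite sets A, B of integers with |A| = |B| and an increasing sequence of positive integers h₁ < h₂ < ... < h_m such that |h_iA| > |h_iB| if i is odd and |h_iA| < |h_iB| if i is even. -/

import Mathlib

open Finset Pointwise

/-- `hsum h A` is the `h`-fold sumset of `A` (pointwise sum of `h` copies). -/
def hsum (h : ℕ) (A : Finset ℤ) : Finset ℤ := ∑ _i ∈ Finset.range h, A

/-- `transl t A` is the translate `t + A`. -/
def transl (t : ℤ) (A : Finset ℤ) : Finset ℤ := A.image (t + ·)

lemma hsum_zero (A : Finset ℤ) : hsum 0 A = {0} := by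
  simp [hsum]; rfl

lemma hsum_succ (h : ℕ) (A : Finset ℤ) : hsum (h+1) A = hsum h A + A := by
  rw [hsum, hsum, Finset.sum_range_succ]

def blk (K : ℕ) : Finset ℤ := {0, (K:ℤ), (K:ℤ)+1}

def pairs (h : ℕ) : Finset (ℕ × ℕ) :=
  ((Finset.range (h+1)) ×ˢ (Finset.range (h+1))).filter (fun p => p.2 ≤ p.1)

lemma mem_pairs {h : ℕ} {p : ℕ × ℕ} : p ∈ pairs h ↔ p.2 ≤ p.1 ∧ p.1 ≤ h := by
  simp [pairs, Finset.mem_filter, Finset.mem_product, Nat.lt_succ_iff]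
  omega

lemma hsum_blk (K h : ℕ) :
    hsum h (blk K) = (pairs h).image (fun p : ℕ × ℕ => ((p.1 : ℤ) * K + p.2 : ℤ)) := by
  induction h with
  | zero =>
      rw [hsum_zero]
      ext x
      simp only [Finset.mem_singleton, Finset.mem_image, mem_pairs]
      constructor
      · rintro rfl; exact ⟨(0,0), ⟨le_refl _, le_refl _⟩, by simp⟩
      · rintro ⟨⟨a,b⟩, ⟨h1, h2⟩, rfl⟩
        simp only at h1 h2
        have ha : a = 0 := by omega
        have hb : b = 0 := by omega
        subst ha; subst hb; simp
  | succ h ih =>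
      rw [hsum_succ, ih]
      ext x
      simp only [Finset.mem_add, Finset.mem_image, mem_pairs, blk, Finset.mem_insert,
        Finset.mem_singleton]
      constructor
      · rintro ⟨y, ⟨⟨j, c⟩, ⟨hcj, hjh⟩, rfl⟩, s, hs, rfl⟩
        rcases hs with rfl | rfl | rfl
        · exact ⟨⟨j, c⟩, ⟨hcj, by omega⟩, by push_cast; ring⟩
        · exact ⟨⟨j+1, c⟩, ⟨by omega, by omega⟩, by push_cast; ring⟩
        · exact ⟨⟨j+1, c+1⟩, ⟨by omega, by omega⟩, by push_cast; ring⟩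
      · rintro ⟨⟨j, c⟩, ⟨hcj, hjh⟩, rfl⟩
        simp only at hcj hjh ⊢
        by_cases hj : j ≤ h
        · exact ⟨(j:ℤ)*K + c, ⟨⟨j, c⟩, ⟨hcj, hj⟩, rfl⟩, 0, by tauto, by ring⟩
        · have hj' : j = h + 1 := by omega
          subst hj'
          by_cases hc : c ≤ h
          · exact ⟨(h:ℤ)*K + c, ⟨⟨h, c⟩, ⟨hc, le_refl _⟩, rfl⟩, (K:ℤ), by tauto,
              by push_cast; ring⟩
          · have hc' : c = h + 1 := by omega
            subst hc'
            exact ⟨(h:ℤ)*K + h, ⟨⟨h, h⟩, ⟨le_refl _, le_refl _⟩, rfl⟩, (K:ℤ)+1, by tauto,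
              by push_cast; ring⟩

lemma div_unique {K j1 c1 j2 c2 : ℕ} (hK : 0 < K) (h1 : c1 < K) (h2 : c2 < K)
    (he : j1*K+c1 = j2*K+c2) : j1 = j2 ∧ c1 = c2 := by
  have d1 : (j1*K+c1)/K = j1 := by
    rw [mul_comm, Nat.mul_add_div hK, Nat.div_eq_of_lt h1, add_zero]
  have d2 : (j2*K+c2)/K = j2 := by
    rw [mul_comm, Nat.mul_add_div hK, Nat.div_eq_of_lt h2, add_zero]
  have hj : j1 = j2 := by rw [← d1, ← d2, he]
  subst hj
  omega

lemma card_hsum_blk_unsat {K h : ℕ} (hK : h + 1 ≤ K) :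
    (hsum h (blk K)).card = (pairs h).card := by
  rw [hsum_blk]
  apply Finset.card_image_of_injOn
  rintro ⟨j1, c1⟩ hp ⟨j2, c2⟩ hq he
  rw [Finset.mem_coe, mem_pairs] at hp
  rw [Finset.mem_coe, mem_pairs] at hq
  simp only at hp hq he ⊢
  have hKpos : 0 < K := by omega
  have h1 : c1 < K := by omega
  have h2 : c2 < K := by omega
  have he' : j1*K+c1 = j2*K+c2 := by
    have : ((j1*K+c1 : ℕ) : ℤ) = ((j2*K+c2 : ℕ) : ℤ) := by push_cast; linarith [he]
    exact_mod_cast this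
  obtain ⟨rfl, rfl⟩ := div_unique hKpos h1 h2 he'
  rfl

lemma card_hsum_blk_eq {K L h : ℕ} (hK : h + 1 ≤ K) (hL : h + 1 ≤ L) :
    (hsum h (blk K)).card = (hsum h (blk L)).card := by
  rw [card_hsum_blk_unsat hK, card_hsum_blk_unsat hL]

lemma hsum_subset_Icc {A : Finset ℤ} {M : ℤ} (hA : A ⊆ Finset.Icc 0 M) (h : ℕ) :
    hsum h A ⊆ Finset.Icc 0 ((h:ℤ) * M) := by
  induction h with
  | zero => rw [hsum_zero]; intro x hx; simp at hx; simp [hx]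
  | succ h ih =>
      rw [hsum_succ]
      intro x hx
      rw [Finset.mem_add] at hx
      obtain ⟨y, hy, z, hz, rfl⟩ := hx
      have hy' := ih hy
      have hz' := hA hz
      simp only [Finset.mem_Icc] at *
      push_cast
      constructor
      · linarith [hy'.1, hz'.1]
      · nlinarith [hy'.2, hz'.2]

lemma blk_subset_Icc (K : ℕ) : blk K ⊆ Finset.Icc 0 ((K:ℤ)+1) := by
  intro x hx
  simp only [blk, Finset.mem_insert, Finset.mem_singleton] at hx
  have h0 : (0:ℤ) ≤ (K:ℤ) := by positivity
  rcases hx with rfl | rfl | rfl <;> rw [Finset.mem_Icc] <;> omega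

lemma card_hsum_blk_upper (K h : ℕ) :
    (hsum h (blk K)).card ≤ h * (K+1) + 1 := by
  have hsub := hsum_subset_Icc (blk_subset_Icc K) h
  have := Finset.card_le_card hsub
  rw [Int.card_Icc] at this
  have e : ((h:ℤ) * ((K:ℤ)+1) + 1 - 0) = ((h*(K+1)+1 : ℕ) : ℤ) := by push_cast; ring
  rw [e, Int.toNat_natCast] at this
  exact this

lemma mem_hsum_blk {K h j c : ℕ} (hcj : c ≤ j) (hjh : j ≤ h) :
    ((j:ℤ) * K + c) ∈ hsum h (blk K) := by
  rw [hsum_blk]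
  exact Finset.mem_image.mpr ⟨⟨j, c⟩, mem_pairs.mpr ⟨hcj, hjh⟩, rfl⟩

lemma card_hsum_blk_lower {K h : ℕ} (hK : 2 ≤ K) (hh : K * K ≤ h) :
    h * K < (hsum h (blk K)).card := by
  have hsub : Finset.Icc (((K:ℤ)-1) * K) ((h:ℤ) * (K+1)) ⊆ hsum h (blk K) := by
    intro x hx
    rw [Finset.mem_Icc] at hx
    obtain ⟨hx1, hx2⟩ := hx
    have hK2 : (2:ℤ) ≤ (K:ℤ) := by exact_mod_cast hK
    have hx0 : 0 ≤ x := le_trans (by nlinarith) hx1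
    lift x to ℕ using hx0 with n
    have e1 : ((K:ℤ)-1) = ((K-1 : ℕ) : ℤ) := by
      push_cast [Nat.cast_sub (by omega : 1 ≤ K)]; ring
    rw [e1] at hx1
    have hn1 : (K-1) * K ≤ n := by exact_mod_cast hx1
    have hn2 : n ≤ h * (K+1) := by exact_mod_cast hx2
    have hKpos : 0 < K := by omega
    have hdm : (n/K)*K + n%K = n := by rw [mul_comm]; exact Nat.div_add_mod n K
    by_cases hq : n / K ≤ h
    · have hr : n % K < K := Nat.mod_lt _ hKpos
      have hq2 : K - 1 ≤ n / K := by
        rw [Nat.le_div_iff_mul_le hKpos]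
        exact hn1
      have : ((n/K : ℕ):ℤ) * K + ((n % K : ℕ):ℤ) ∈ hsum h (blk K) :=
        mem_hsum_blk (by omega) hq
      convert this using 1
      exact_mod_cast hdm.symm
    · push_neg at hq
      have hd := Nat.div_mul_le_self n K
      have hge : h * K ≤ n := by nlinarith
      have hle : n - h*K ≤ h := by
        have : h*(K+1) = h*K + h := by ring
        omega
      have : ((h : ℕ):ℤ) * K + ((n - h*K : ℕ):ℤ) ∈ hsum h (blk K) :=
        mem_hsum_blk hle (le_refl h)
      convert this using 1
      push_cast [Nat.cast_sub hge]
      ring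
  have hcard := Finset.card_le_card hsub
  rw [Int.card_Icc] at hcard
  have key : ((h:ℤ) * ((K:ℤ)+1) + 1 - ((K:ℤ)-1)*K) = (((h * (K+1) + 1) - (K-1)*K : ℕ) : ℤ) := by
    have h1 : (K-1)*K ≤ h * (K+1) + 1 := by
      calc (K-1)*K ≤ K*K := Nat.mul_le_mul_right _ (Nat.sub_le _ _)
        _ ≤ h := hh
        _ ≤ h * (K+1) + 1 := by nlinarith
    push_cast [Nat.cast_sub h1, Nat.cast_sub (by omega : 1 ≤ K)]
    ring
  rw [key, Int.toNat_natCast] at hcard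
  have expand : h * (K+1) = h*K + h := by ring
  have expand2 : (K-1)*K ≤ K*K := Nat.mul_le_mul_right _ (Nat.sub_le _ _)
  omega

lemma hsum_singleton_zero (h : ℕ) : hsum h ({0} : Finset ℤ) = {0} := by
  induction h with
  | zero => exact hsum_zero _
  | succ h ih => rw [hsum_succ, ih]; ext x; simp [Finset.mem_add]

lemma hsum_add_sets (h : ℕ) (X Y : Finset ℤ) : hsum h (X + Y) = hsum h X + hsum h Y := by
  induction h with
  | zero => rw [hsum_zero, hsum_zero, hsum_zero]; ext x; simp [Finset.mem_add]
  | succ h ih =>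
      rw [hsum_succ, hsum_succ, hsum_succ, ih]
      ext x
      constructor <;> intro hx
      · rw [Finset.mem_add] at hx
        obtain ⟨y, hy, z, hz, rfl⟩ := hx
        rw [Finset.mem_add] at hy hz
        obtain ⟨a, ha, b, hb, rfl⟩ := hy
        obtain ⟨c, hc, d, hd, rfl⟩ := hz
        have : a + b + (c + d) = (a + c) + (b + d) := by ring
        rw [this]
        exact Finset.add_mem_add (Finset.add_mem_add ha hc) (Finset.add_mem_add hb hd)
      · rw [Finset.mem_add] at hx
        obtain ⟨y, hy, z, hz, rfl⟩ := hx
        rw [Finset.mem_add] at hy hz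
        obtain ⟨a, ha, b, hb, rfl⟩ := hy
        obtain ⟨c, hc, d, hd, rfl⟩ := hz
        have : a + b + (c + d) = (a + c) + (b + d) := by ring
        rw [this]
        exact Finset.add_mem_add (Finset.add_mem_add ha hc) (Finset.add_mem_add hb hd)

lemma image_add_image (N : ℤ) (X Y : Finset ℤ) :
    (X.image (fun x => N * x)) + (Y.image (fun x => N * x)) = (X + Y).image (fun x => N * x) := by
  ext x
  simp only [Finset.mem_add, Finset.mem_image]
  constructor
  · rintro ⟨y, ⟨a, ha, rfl⟩, z, ⟨b, hb, rfl⟩, rfl⟩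
    exact ⟨a + b, ⟨a, ha, b, hb, rfl⟩, by ring⟩
  · rintro ⟨c, ⟨a, ha, b, hb, rfl⟩, rfl⟩
    exact ⟨N*a, ⟨a, ha, rfl⟩, N*b, ⟨b, hb, rfl⟩, by ring⟩

lemma hsum_image_mul (N : ℤ) (h : ℕ) (X : Finset ℤ) :
    hsum h (X.image (fun x => N * x)) = (hsum h X).image (fun x => N * x) := by
  induction h with
  | zero => rw [hsum_zero, hsum_zero]; simp
  | succ h ih => rw [hsum_succ, hsum_succ, ih, image_add_image]

def comb (N : ℤ) (F : ℕ → Finset ℤ) : ℕ → Finset ℤ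
  | 0 => {0}
  | n+1 => F (n+1) + (comb N F n).image (fun x => N * x)

lemma card_add_scaled {N : ℤ} {X Y : Finset ℤ} (hX : X ⊆ Finset.Ico 0 N) :
    (X + Y.image (fun x => N * x)).card = X.card * Y.card := by
  have hset : X + Y.image (fun x => N * x) = (X ×ˢ Y).image (fun p => p.1 + N * p.2) := by
    ext x
    simp only [Finset.mem_add, Finset.mem_image, Finset.mem_product]
    constructor
    · rintro ⟨y, hy, z, ⟨b, hb, rfl⟩, rfl⟩
      exact ⟨(y, b), ⟨hy, hb⟩, rfl⟩
    · rintro ⟨⟨a, b⟩, ⟨ha, hb⟩, rfl⟩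
      exact ⟨a, ha, N*b, ⟨b, hb, rfl⟩, rfl⟩
  rw [hset, Finset.card_image_of_injOn, Finset.card_product]
  rintro ⟨x1, y1⟩ hp ⟨x2, y2⟩ hq he
  simp only [Finset.mem_coe, Finset.mem_product] at hp hq
  have hx1 := hX hp.1
  have hx2 := hX hq.1
  rw [Finset.mem_Ico] at hx1 hx2
  simp only at he ⊢
  have hy : y1 = y2 := by
    by_contra hd
    have h1 : x1 - x2 = N * (y2 - y1) := by linarith
    have h2 : |x1 - x2| < N := abs_sub_lt_iff.mpr ⟨by linarith, by linarith⟩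
    have h3 : (1:ℤ) ≤ |y2 - y1| := Int.one_le_abs (sub_ne_zero.mpr (Ne.symm hd))
    have h4 : N ≤ |x1 - x2| := by
      rw [h1, abs_mul, abs_of_nonneg (by linarith : (0:ℤ) ≤ N)]
      nlinarith
    linarith
  subst hy
  have : x1 = x2 := by linarith
  subst this
  rfl

lemma comb_card {N : ℤ} {F : ℕ → Finset ℤ} (n : ℕ)
    (hF : ∀ j, 1 ≤ j → j ≤ n → F j ⊆ Finset.Ico 0 N) :
    (comb N F n).card = ∏ j ∈ Finset.Icc 1 n, (F j).card := by
  induction n with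
  | zero => simp [comb]
  | succ n ih =>
      rw [comb, card_add_scaled (hF (n+1) (by omega) (le_refl _)),
        ih (fun j h1 h2 => hF j h1 (by omega)), Finset.prod_Icc_succ_top (by omega : 1 ≤ n+1)]
      ring

lemma comb_nonempty {N : ℤ} {F : ℕ → Finset ℤ} (n : ℕ)
    (hF : ∀ j, 1 ≤ j → j ≤ n → (F j).Nonempty) : (comb N F n).Nonempty := by
  induction n with
  | zero => exact ⟨0, by simp [comb]⟩
  | succ n ih =>
      exact Finset.Nonempty.add (hF (n+1) (by omega) (le_refl _))
        ((ih (fun j h1 h2 => hF j h1 (by omega))).image _)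

lemma hsum_comb (N : ℤ) (F : ℕ → Finset ℤ) (h n : ℕ) :
    hsum h (comb N F n) = comb N (fun j => hsum h (F j)) n := by
  induction n with
  | zero => rw [comb, comb]; exact hsum_singleton_zero h
  | succ n ih => rw [comb, comb, hsum_add_sets, hsum_image_mul, ih]

def KK (j : ℕ) : ℕ := 10 ^ (10 ^ j)
def LL (j : ℕ) : ℕ := (KK j)^3

lemma KK_ge (j : ℕ) : 10 ≤ KK j := by
  have : 1 ≤ 10 ^ j := Nat.one_le_pow _ _ (by norm_num)
  calc 10 = 10 ^ 1 := by norm_num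
    _ ≤ 10 ^ (10 ^ j) := Nat.pow_le_pow_right (by norm_num) this

lemma KK_pos (j : ℕ) : 0 < KK j := by have := KK_ge j; omega

lemma KK_succ (j : ℕ) : KK (j+1) = (KK j)^10 := by
  rw [KK, KK, pow_succ, pow_mul]

lemma KK_mono {j j' : ℕ} (h : j ≤ j') : KK j ≤ KK j' :=
  Nat.pow_le_pow_right (by norm_num) (Nat.pow_le_pow_right (by norm_num) h)

lemma prodK (i : ℕ) : 2^i * ∏ j ∈ Finset.range i, (KK j)^2 ≤ KK i := by
  induction i with
  | zero => simp [KK]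
  | succ i ih =>
      rw [Finset.prod_range_succ, KK_succ]
      have h2 : 2 ≤ KK i := le_trans (by norm_num) (KK_ge i)
      calc 2^(i+1) * ((∏ j ∈ Finset.range i, (KK j)^2) * (KK i)^2)
          = (2^i * ∏ j ∈ Finset.range i, (KK j)^2) * (2 * (KK i)^2) := by ring
        _ ≤ KK i * (2 * (KK i)^2) := Nat.mul_le_mul_right _ ih
        _ = 2 * (KK i)^3 := by ring
        _ ≤ (KK i) * (KK i)^3 := Nat.mul_le_mul_right _ h2
        _ = (KK i)^4 := by ring
        _ ≤ (KK i)^10 := Nat.pow_le_pow_right (KK_pos i) (by norm_num)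

def par (i j : ℕ) : ℕ := if j % 2 = i % 2 then LL j else KK j
def opp (i j : ℕ) : ℕ := if j % 2 = i % 2 then KK j else LL j

lemma par_pos (i j : ℕ) : 0 < par i j := by
  unfold par LL; have := KK_pos j; split <;> positivity

lemma opp_pos (i j : ℕ) : 0 < opp i j := by
  unfold opp LL; have := KK_pos j; split <;> positivity

lemma key_prod (i : ℕ) (hi : 1 ≤ i) :
    2^i * ∏ j ∈ Finset.Ioc 0 i, opp i j < ∏ j ∈ Finset.Ioc 0 i, par i j := by
  obtain ⟨k, rfl⟩ : ∃ k, i = k + 1 := ⟨i - 1, by omega⟩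
  set i := k + 1 with hi_def
  set P := ∏ j ∈ Finset.Ioc 0 i, par i j with hP
  set Q := ∏ j ∈ Finset.Ioc 0 i, opp i j with hQ
  set T := ∏ j ∈ Finset.Ioc 0 k, (KK j)^2 with hT
  have hPpos : 0 < P := Finset.prod_pos (fun j _ => par_pos i j)
  have hsplit : ∀ f : ℕ → ℕ, ∏ j ∈ Finset.Ioc 0 i, f j = (∏ j ∈ Finset.Ioc 0 k, f j) * f i :=
    fun f => by rw [hi_def]; exact Finset.prod_Ioc_succ_top (Nat.zero_le k) f
  have hPQ : P * Q = ∏ j ∈ Finset.Ioc 0 i, (KK j)^4 := by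
    rw [hP, hQ, ← Finset.prod_mul_distrib]
    apply Finset.prod_congr rfl
    intro j hj
    by_cases h : j % 2 = i % 2 <;> simp [par, opp, h, LL] <;> ring
  have hTle : 2^i * T ≤ KK i := by
    refine le_trans (Nat.mul_le_mul_left _ ?_) (prodK i)
    apply Finset.prod_le_prod_of_subset_of_one_le'
    · intro j hj
      rw [Finset.mem_Ioc] at hj
      rw [Finset.mem_range]
      omega
    · intro j _ _
      exact Nat.one_le_pow _ _ (KK_pos j)
  have hP2 : T * (KK i)^6 ≤ P^2 := by
    have : P^2 = ∏ j ∈ Finset.Ioc 0 i, (par i j)^2 := by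
      rw [hP, ← Finset.prod_pow]
    rw [this, hsplit (fun j => (par i j)^2)]
    have hpar_i : par i i = LL i := by simp [par]
    apply Nat.mul_le_mul
    · rw [hT]
      apply Finset.prod_le_prod'
      intro j _
      have : KK j ≤ par i j := by
        unfold par LL
        split
        · calc KK j = (KK j)^1 := (pow_one _).symm
            _ ≤ (KK j)^3 := Nat.pow_le_pow_right (KK_pos j) (by norm_num)
        · exact le_refl _
      exact Nat.pow_le_pow_left this 2
    · rw [hpar_i, LL, ← pow_mul]
  have hmain : P * (2^i * Q) < P * P := by
    have step1 : P * (2^i * Q) = 2^i * (∏ j ∈ Finset.Ioc 0 i, (KK j)^4) := by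
      rw [← hPQ]; ring
    have step2 : ∏ j ∈ Finset.Ioc 0 i, (KK j)^4 = T * T * (KK i)^4 := by
      rw [hsplit (fun j => (KK j)^4), hT, ← Finset.prod_mul_distrib]
      congr 1
      apply Finset.prod_congr rfl
      intro j _
      ring
    rw [step1, step2]
    have h2 : 2 ≤ KK i := le_trans (by norm_num) (KK_ge i)
    have hTpos : 0 < T := Finset.prod_pos (fun j _ => by have := KK_pos j; positivity)
    calc 2^i * (T * T * (KK i)^4) = (2^i * T) * (T * (KK i)^4) := by ring
      _ ≤ KK i * (T * (KK i)^4) := Nat.mul_le_mul_right _ hTle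
      _ = T * (KK i)^5 := by ring
      _ < T * (KK i)^6 := by
          have h56 : (KK i)^5 < (KK i)^6 := Nat.pow_lt_pow_right (by omega) (by omega)
          exact mul_lt_mul_of_pos_left h56 hTpos
      _ ≤ P^2 := hP2
      _ = P * P := by ring
  exact Nat.lt_of_mul_lt_mul_left hmain

lemma KK_le_par (i j : ℕ) : KK j ≤ par i j := by
  unfold par LL
  split
  · calc KK j = (KK j)^1 := (pow_one _).symm
      _ ≤ (KK j)^3 := Nat.pow_le_pow_right (KK_pos j) (by norm_num)
  · exact le_refl _

lemma par_le (i j : ℕ) : par i j ≤ (KK j)^3 := by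
  unfold par LL
  split
  · exact le_refl _
  · calc KK j = (KK j)^1 := (pow_one _).symm
      _ ≤ (KK j)^3 := Nat.pow_le_pow_right (KK_pos j) (by norm_num)

lemma opp_le (i j : ℕ) : opp i j ≤ (KK j)^3 := by
  unfold opp LL
  split
  · calc KK j = (KK j)^1 := (pow_one _).symm
      _ ≤ (KK j)^3 := Nat.pow_le_pow_right (KK_pos j) (by norm_num)
  · exact le_refl _

lemma KK_le_opp (i j : ℕ) : KK j ≤ opp i j := by
  unfold opp LL
  split
  · exact le_refl _
  · calc KK j = (KK j)^1 := (pow_one _).symm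
      _ ≤ (KK j)^3 := Nat.pow_le_pow_right (KK_pos j) (by norm_num)

lemma a_lower {i j : ℕ} (hj : j ∈ Finset.Ioc 0 i) :
    (KK i)^7 * par i j < (hsum ((KK i)^7) (blk (par i j))).card := by
  rw [Finset.mem_Ioc] at hj
  have h2 : 2 ≤ par i j := le_trans (by linarith [KK_ge j]) (KK_le_par i j)
  apply card_hsum_blk_lower h2
  calc par i j * par i j ≤ (KK j)^3 * (KK j)^3 := Nat.mul_le_mul (par_le i j) (par_le i j)
    _ = (KK j)^6 := by ring
    _ ≤ (KK i)^6 := Nat.pow_le_pow_left (KK_mono hj.2) 6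
    _ ≤ (KK i)^7 := Nat.pow_le_pow_right (KK_pos i) (by norm_num)

lemma b_upper {i j : ℕ} (hj : j ∈ Finset.Ioc 0 i) :
    (hsum ((KK i)^7) (blk (opp i j))).card ≤ 2 * (KK i)^7 * opp i j := by
  have h2 : 2 ≤ opp i j := le_trans (by linarith [KK_ge j]) (KK_le_opp i j)
  have hpos : 1 ≤ (KK i)^7 := Nat.one_le_pow _ _ (KK_pos i)
  refine le_trans (card_hsum_blk_upper _ _) ?_
  nlinarith

lemma compare_at {i : ℕ} (hi : 1 ≤ i) {a b : ℕ → ℕ}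
    (ha : ∀ j ∈ Finset.Ioc 0 i, (KK i)^7 * par i j < a j)
    (hb : ∀ j ∈ Finset.Ioc 0 i, b j ≤ 2 * (KK i)^7 * opp i j) :
    ∏ j ∈ Finset.Ioc 0 i, b j < ∏ j ∈ Finset.Ioc 0 i, a j := by
  set h := (KK i)^7 with hh
  have hpos : 0 < h := by rw [hh]; have := KK_pos i; positivity
  have hcard : (Finset.Ioc 0 i).card = i := by rw [Nat.card_Ioc]; omega
  calc ∏ j ∈ Finset.Ioc 0 i, b j
      ≤ ∏ j ∈ Finset.Ioc 0 i, (2 * h * opp i j) := Finset.prod_le_prod' hb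
    _ = (2*h)^i * ∏ j ∈ Finset.Ioc 0 i, opp i j := by
        rw [Finset.prod_mul_distrib, Finset.prod_const, hcard]
    _ = h^i * (2^i * ∏ j ∈ Finset.Ioc 0 i, opp i j) := by ring
    _ < h^i * ∏ j ∈ Finset.Ioc 0 i, par i j :=
        mul_lt_mul_of_pos_left (key_prod i hi) (pow_pos hpos i)
    _ = ∏ j ∈ Finset.Ioc 0 i, (h * par i j) := by
        rw [Finset.prod_mul_distrib, Finset.prod_const, hcard]
    _ ≤ ∏ j ∈ Finset.Ioc 0 i, a j :=
        Finset.prod_le_prod' (fun j hj => le_of_lt (ha j hj))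

def apar (j : ℕ) : ℕ := if j % 2 = 1 then LL j else KK j
def bpar (j : ℕ) : ℕ := if j % 2 = 1 then KK j else LL j

lemma apar_eq_par {i : ℕ} (hi : i % 2 = 1) (j : ℕ) : apar j = par i j := by
  unfold apar par; rw [hi]

lemma bpar_eq_opp {i : ℕ} (hi : i % 2 = 1) (j : ℕ) : bpar j = opp i j := by
  unfold bpar opp; rw [hi]

lemma apar_eq_opp {i : ℕ} (hi : i % 2 = 0) (j : ℕ) : apar j = opp i j := by
  unfold apar opp; rw [hi]
  by_cases h : j % 2 = 1
  · rw [if_pos h, if_neg (by omega)]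
  · rw [if_neg h, if_pos (by omega)]

lemma bpar_eq_par {i : ℕ} (hi : i % 2 = 0) (j : ℕ) : bpar j = par i j := by
  unfold bpar par; rw [hi]
  by_cases h : j % 2 = 1
  · rw [if_pos h, if_neg (by omega)]
  · rw [if_neg h, if_pos (by omega)]

lemma KK_le_apar (j : ℕ) : KK j ≤ apar j := by
  unfold apar LL; split
  · exact le_self_pow (by have := KK_pos j; omega) (by norm_num)
  · exact le_refl _

lemma apar_le (j : ℕ) : apar j ≤ (KK j)^3 := by
  unfold apar LL; split
  · exact le_refl _
  · exact le_self_pow (by have := KK_pos j; omega) (by norm_num)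

lemma KK_le_bpar (j : ℕ) : KK j ≤ bpar j := by
  unfold bpar LL; split
  · exact le_refl _
  · exact le_self_pow (by have := KK_pos j; omega) (by norm_num)

lemma bpar_le (j : ℕ) : bpar j ≤ (KK j)^3 := by
  unfold bpar LL; split
  · exact le_self_pow (by have := KK_pos j; omega) (by norm_num)
  · exact le_refl _

lemma blk_nonempty (P : ℕ) : (blk P).Nonempty := ⟨0, by simp [blk]⟩

lemma card_blk {P : ℕ} (hP : 1 ≤ P) : (blk P).card = 3 := by
  have h1 : ((P:ℤ)) ∉ ({(P:ℤ)+1} : Finset ℤ) := by simp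
  have h0 : (0:ℤ) ∉ insert ((P:ℤ)) ({(P:ℤ)+1} : Finset ℤ) := by
    simp only [Finset.mem_insert, Finset.mem_singleton]
    push_cast
    omega
  rw [blk, Finset.card_insert_of_notMem h0, Finset.card_insert_of_notMem h1,
    Finset.card_singleton]

lemma hsum_blk_sub_Ico {P h N' : ℕ} (hP : h * (P+1) < N') :
    hsum h (blk P) ⊆ Finset.Ico 0 ((N':ℕ):ℤ) := by
  intro x hx
  have := hsum_subset_Icc (blk_subset_Icc P) h hx
  rw [Finset.mem_Icc] at this
  rw [Finset.mem_Ico]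
  refine ⟨this.1, lt_of_le_of_lt this.2 ?_⟩
  have : ((h * (P+1) : ℕ) : ℤ) < ((N' : ℕ) : ℤ) := by exact_mod_cast hP
  push_cast at this ⊢
  linarith

lemma KK_strict {i j : ℕ} (h : i < j) : KK i < KK j :=
  Nat.pow_lt_pow_right (by norm_num) (Nat.pow_lt_pow_right (by norm_num) h)

lemma numeric_bound {i m P : ℕ} (him : i ≤ m) (hP : P ≤ (KK m)^3) :
    (KK i)^7 * (P + 1) < (KK m)^11 := by
  have h10 := KK_ge m
  have h1 : (KK i)^7 ≤ (KK m)^7 := Nat.pow_le_pow_left (KK_mono him) 7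
  have h2 : P + 1 < (KK m)^4 := by
    have e : (KK m)^4 = KK m * (KK m)^3 := by ring
    have h3 : 10 * (KK m)^3 ≤ KK m * (KK m)^3 := Nat.mul_le_mul_right _ h10
    have h4 : 1 ≤ (KK m)^3 := Nat.one_le_pow _ _ (KK_pos m)
    omega
  calc (KK i)^7 * (P + 1) ≤ (KK m)^7 * (P+1) := Nat.mul_le_mul_right _ h1
    _ < (KK m)^7 * (KK m)^4 := by
        apply mul_lt_mul_of_pos_left h2
        have := KK_pos m; positivity
    _ = (KK m)^11 := by ring

lemma KK_sep {i j : ℕ} (h : i < j) : (KK i)^7 + 1 ≤ KK j := by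
  have h1 : KK (i+1) ≤ KK j := KK_mono (by omega)
  rw [KK_succ] at h1
  have h2 : 2 ≤ KK i := by have := KK_ge i; omega
  have : (KK i)^7 + 1 ≤ (KK i)^10 := by
    have e : (KK i)^10 = (KK i)^7 * (KK i)^3 := by ring
    have h3 : 2 ≤ (KK i)^3 := le_trans h2 (le_self_pow (by omega) (by norm_num))
    have h4 : 1 ≤ (KK i)^7 := Nat.one_le_pow _ _ (by omega)
    nlinarith
  omega

lemma blk_sub_Ico {P N' : ℕ} (h : P + 1 < N') : blk P ⊆ Finset.Ico 0 ((N':ℕ):ℤ) := by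
  intro x hx
  have := blk_subset_Icc P hx
  rw [Finset.mem_Icc] at this
  rw [Finset.mem_Ico]
  refine ⟨this.1, lt_of_le_of_lt this.2 ?_⟩
  have h' : ((P + 1 : ℕ) : ℤ) < ((N' : ℕ) : ℤ) := by exact_mod_cast h
  push_cast at h' ⊢
  linarith

lemma hsum_nonempty {A : Finset ℤ} (hA : A.Nonempty) (h : ℕ) : (hsum h A).Nonempty := by
  induction h with
  | zero => rw [hsum_zero]; exact ⟨0, by simp⟩
  | succ h ih => rw [hsum_succ]; exact ih.add hA

lemma final_compare {m i : ℕ} (h1 : 1 ≤ i) (h2 : i ≤ m)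
    (p q : ℕ → ℕ)
    (hp_par : ∀ j, p j = par i j) (hq_opp : ∀ j, q j = opp i j)
    (hpK : ∀ j, KK j ≤ p j ∧ p j ≤ KK j ^3) (hqK : ∀ j, KK j ≤ q j ∧ q j ≤ KK j^3) :
    (hsum ((KK i)^7) (comb ((KK m ^ 11 : ℕ):ℤ) (fun j => blk (q j)) m)).card <
    (hsum ((KK i)^7) (comb ((KK m ^ 11 : ℕ):ℤ) (fun j => blk (p j)) m)).card := by
  have hsub : ∀ (r : ℕ → ℕ), (∀ j, r j ≤ KK j ^3) → ∀ j, 1 ≤ j → j ≤ m →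
      hsum ((KK i)^7) (blk (r j)) ⊆ Finset.Ico 0 ((KK m ^ 11 : ℕ):ℤ) := fun r hr j hj1 hj2 =>
    hsum_blk_sub_Ico (numeric_bound h2 (le_trans (hr j) (Nat.pow_le_pow_left (KK_mono hj2) 3)))
  rw [hsum_comb, hsum_comb, comb_card m (hsub p (fun j => (hpK j).2)),
    comb_card m (hsub q (fun j => (hqK j).2))]
  rw [(by exact Finset.Icc_add_one_left_eq_Ioc 0 m : Finset.Icc 1 m = Finset.Ioc 0 m), ← Finset.prod_Ioc_consecutive _ (Nat.zero_le i) h2,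
    ← Finset.prod_Ioc_consecutive _ (Nat.zero_le i) h2]
  have htail : ∏ j ∈ Finset.Ioc i m, (hsum ((KK i)^7) (blk (q j))).card
      = ∏ j ∈ Finset.Ioc i m, (hsum ((KK i)^7) (blk (p j))).card := by
    apply Finset.prod_congr rfl
    intro j hj
    rw [Finset.mem_Ioc] at hj
    have hsep := KK_sep hj.1
    exact card_hsum_blk_eq (le_trans hsep (hqK j).1) (le_trans hsep (hpK j).1)
  rw [htail]
  have htailpos : 0 < ∏ j ∈ Finset.Ioc i m, (hsum ((KK i)^7) (blk (p j))).card :=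
    Finset.prod_pos fun j _ => Finset.card_pos.mpr (hsum_nonempty (blk_nonempty _) _)
  apply mul_lt_mul_of_pos_right _ htailpos
  apply compare_at h1
  · intro j hj
    rw [hp_par j]
    exact a_lower hj
  · intro j hj
    rw [hq_opp j]
    exact b_upper hj

theorem stmt_12 (m : ℕ) (hm : 3 ≤ m) :
    ∃ A B : Finset ℤ, ∃ hs : ℕ → ℕ,
      A.Nonempty ∧ B.Nonempty ∧ A.card = B.card ∧
      StrictMonoOn hs (Finset.Icc 1 m) ∧ (∀ i, 1 ≤ i → i ≤ m → 0 < hs i) ∧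
      ∀ i, 1 ≤ i → i ≤ m →
        (Odd i → (hsum (hs i) B).card < (hsum (hs i) A).card) ∧
        (Even i → (hsum (hs i) A).card < (hsum (hs i) B).card) := by
  refine ⟨comb ((KK m ^ 11 : ℕ):ℤ) (fun j => blk (apar j)) m,
    comb ((KK m ^ 11 : ℕ):ℤ) (fun j => blk (bpar j)) m,
    (fun i => (KK i)^7), ?_, ?_, ?_, ?_, ?_, ?_⟩
  · exact comb_nonempty m (fun j _ _ => blk_nonempty _)
  · exact comb_nonempty m (fun j _ _ => blk_nonempty _)
  · have hsubA : ∀ j, 1 ≤ j → j ≤ m → blk (apar j) ⊆ Finset.Ico 0 ((KK m ^ 11 : ℕ):ℤ) := by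
      intro j hj1 hj2
      apply blk_sub_Ico
      have hb : apar j ≤ KK m ^ 3 := le_trans (apar_le j) (Nat.pow_le_pow_left (KK_mono hj2) 3)
      have := numeric_bound (Nat.zero_le m) hb
      have hone : 1 ≤ (KK 0)^7 := Nat.one_le_pow _ _ (KK_pos 0)
      nlinarith
    have hsubB : ∀ j, 1 ≤ j → j ≤ m → blk (bpar j) ⊆ Finset.Ico 0 ((KK m ^ 11 : ℕ):ℤ) := by
      intro j hj1 hj2
      apply blk_sub_Ico
      have hb : bpar j ≤ KK m ^ 3 := le_trans (bpar_le j) (Nat.pow_le_pow_left (KK_mono hj2) 3)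
      have := numeric_bound (Nat.zero_le m) hb
      have hone : 1 ≤ (KK 0)^7 := Nat.one_le_pow _ _ (KK_pos 0)
      nlinarith
    rw [comb_card m hsubA, comb_card m hsubB]
    apply Finset.prod_congr rfl
    intro j _
    rw [card_blk (le_trans (by linarith [KK_ge j]) (KK_le_apar j)),
      card_blk (le_trans (by linarith [KK_ge j]) (KK_le_bpar j))]
  · intro x _ y _ hxy
    exact Nat.pow_lt_pow_left (KK_strict hxy) (by norm_num)
  · intro i _ _
    exact Nat.pow_pos (KK_pos i)
  · intro i hi1 hi2
    constructor
    · intro hodd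
      have hi2' : i % 2 = 1 := Nat.odd_iff.mp hodd
      exact final_compare hi1 hi2 apar bpar (apar_eq_par hi2') (bpar_eq_opp hi2')
        (fun j => ⟨KK_le_apar j, apar_le j⟩) (fun j => ⟨KK_le_bpar j, bpar_le j⟩)
    · intro heven
      have hi2' : i % 2 = 0 := Nat.even_iff.mp heven
      exact final_compare hi1 hi2 bpar apar (bpar_eq_par hi2') (apar_eq_opp hi2')
        (fun j => ⟨KK_le_bpar j, bpar_le j⟩) (fun j => ⟨KK_le_apar j, apar_le j⟩)
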